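/- Let A₀ ⊇ A₁ ⊇ ⋯ be random subsets of an n-element vertex set where A₀ = V and A_{i+1} is obtained from A_i by keeping each element independently with probability δ·n^{−λ_i/k}. For any vertex u and level j, the bunch B_j(u) = { v ∈ A_j : d(u,v) < d(u, p_{j+1}(u)) } (where p_{j+1}(u) is the nearest vertex of A_{j+1} to u) satisfies E[|B_j(u)|] ≤ (1/δ)·n^{λ_j/k} − 1. -/

import Mathlib

open MeasureTheory
open scoped ENNReal

/-- Expected bunch size. `Aj ⊆ V` is a level set; `A_{j+1}` is obtained by
keeping each vertex of `Aj` independently with probability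
`q = δ·n^{−λ/k}` (the sample space is `V → Bool` with the product Bernoulli
measure). Distances from `u` to vertices of `Aj` are distinct (ties broken).
The bunch of `u` consists of those `v ∈ Aj` strictly closer to `u` than every
kept vertex. Then its expected size is at most `(1/δ)·n^{λ/k} − 1`. -/
theorem stmt17 {V : Type*} [Fintype V] [DecidableEq V]
    (d : V → V → ℝ) (u : V) (Aj : Finset V)
    (hinj : ∀ v ∈ Aj, ∀ w ∈ Aj, d u v = d u w → v = w)
    (n : ℕ) (hn : n = Fintype.card V)
    (δ lam k : ℝ) (hδ0 : 0 < δ) (hδ : δ ≤ 1 / 2) (hlam : 0 ≤ lam) (hk : 1 ≤ k)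
    (q : ℝ≥0∞) (hq : q = ENNReal.ofReal (δ * (n : ℝ) ^ (-(lam / k)))) (hq1 : q ≤ 1)
    (μ : Measure (V → Bool))
    (hμ : μ = Measure.pi fun _ => (PMF.ofFintype (fun b => cond b q (1 - q)) (by simp [hq1])).toMeasure) :
    ∫⁻ ω, ((Aj.filter
        (fun v => ∀ x ∈ Aj, ω x = true → d u v < d u x)).card : ℝ≥0∞) ∂μ
      ≤ ENNReal.ofReal ((1 / δ) * (n : ℝ) ^ (lam / k) - 1) := by
  classical
  subst hμ
  rcases Nat.eq_zero_or_pos n with hn0 | hnpos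
  · -- `V` is empty, so the bunch is empty and the integral is `0`.
    have : IsEmpty V := Fintype.card_eq_zero_iff.mp (hn.symm.trans hn0)
    have hA : Aj = ∅ := Finset.eq_empty_of_isEmpty Aj
    simp [hA]
  -- Now `1 ≤ n`.
  have hnR : (1 : ℝ) ≤ (n : ℝ) := by exact_mod_cast hnpos
  have hnR0 : (0 : ℝ) < (n : ℝ) := lt_of_lt_of_le one_pos hnR
  set a : ℝ := δ * (n : ℝ) ^ (-(lam / k)) with ha_def
  have ha : 0 < a := mul_pos hδ0 (Real.rpow_pos_of_pos hnR0 _)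
  have hq0 : q ≠ 0 := by
    rw [hq]
    exact (ENNReal.ofReal_pos.mpr ha).ne'
  have hqtop : q ≠ ∞ := by rw [hq]; exact ENNReal.ofReal_ne_top
  set r : ℝ≥0∞ := 1 - q with hr
  -- the set of vertices at least as close as `v`
  set S : V → Finset V := fun v => Aj.filter (fun x => d u x ≤ d u v) with hS
  -- the relevant events as cylinder sets
  have hE : ∀ v : V,
      {ω : V → Bool | ∀ x ∈ Aj, ω x = true → d u v < d u x}
        = Set.pi Set.univ
            (fun x => if x ∈ S v then ({false} : Set Bool) else Set.univ) := by
    intro v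
    ext ω
    simp only [Set.mem_setOf_eq, Set.mem_pi, Set.mem_univ, forall_true_left, hS,
      Finset.mem_filter]
    constructor
    · intro h x
      split_ifs with hx
      · rcases hx with ⟨hxA, hxd⟩
        by_contra hne
        have hxt : ω x = true := by
          cases hb : ω x with
          | false => exact absurd (by simp [hb]) hne
          | true => rfl
        exact absurd (h x hxA hxt) (not_lt.mpr hxd)
      · trivial
    · intro h x hxA hxt
      by_contra hnlt
      have := h x
      rw [if_pos ⟨hxA, le_of_not_gt hnlt⟩] at this
      simp [hxt] at this
  have hmeas : ∀ v : V,
      MeasurableSet {ω : V → Bool | ∀ x ∈ Aj, ω x = true → d u v < d u x} := by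
    intro v
    rw [hE v]
    refine MeasurableSet.univ_pi fun x => ?_
    split_ifs
    · exact measurableSet_singleton _
    · exact MeasurableSet.univ
  -- measure of the events
  have hμE : ∀ v : V,
      (Measure.pi fun _ : V => (PMF.ofFintype (fun b => cond b q (1 - q)) (by simp [hq1])).toMeasure)
        {ω : V → Bool | ∀ x ∈ Aj, ω x = true → d u v < d u x}
        = r ^ (S v).card := by
    intro v
    rw [hE v, Measure.pi_pi]
    have hb : (PMF.ofFintype (fun b => cond b q (1 - q)) (by simp [hq1])).toMeasure ({false} : Set Bool) = r := by
      rw [PMF.toMeasure_apply_singleton _ _ (measurableSet_singleton _),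
        PMF.ofFintype_apply]
      rfl
    calc ∏ x : V, (PMF.ofFintype (fun b => cond b q (1 - q)) (by simp [hq1])).toMeasure
            (if x ∈ S v then ({false} : Set Bool) else Set.univ)
        = ∏ x : V, (if x ∈ S v then r else 1) := by
          refine Finset.prod_congr rfl fun x _ => ?_
          split_ifs
          · exact hb
          · exact measure_univ
      _ = r ^ (S v).card := by
          rw [Finset.prod_ite_mem, Finset.univ_inter, Finset.prod_const]
  -- rewrite the integrand as a sum of indicators
  have hcard : ∀ ω : V → Bool,
      ((Aj.filter (fun v => ∀ x ∈ Aj, ω x = true → d u v < d u x)).card : ℝ≥0∞)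
        = ∑ v ∈ Aj, Set.indicator
            {ω' : V → Bool | ∀ x ∈ Aj, ω' x = true → d u v < d u x}
            (fun _ => (1 : ℝ≥0∞)) ω := by
    intro ω
    rw [Finset.card_filter, Nat.cast_sum]
    refine Finset.sum_congr rfl fun v hv => ?_
    by_cases h : ∀ x ∈ Aj, ω x = true → d u v < d u x
    · simp [Set.indicator_apply, Set.mem_setOf_eq, h]
    · simp [Set.indicator_apply, Set.mem_setOf_eq, h]
  have hint : ∫⁻ ω, ((Aj.filter
      (fun v => ∀ x ∈ Aj, ω x = true → d u v < d u x)).card : ℝ≥0∞)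
        ∂(Measure.pi fun _ : V => (PMF.ofFintype (fun b => cond b q (1 - q)) (by simp [hq1])).toMeasure)
      = ∑ v ∈ Aj, r ^ (S v).card := by
    rw [lintegral_congr hcard,
      lintegral_finset_sum _ fun v _ => measurable_const.indicator (hmeas v)]
    refine Finset.sum_congr rfl fun v hv => ?_
    rw [lintegral_indicator_const (hmeas v), one_mul, hμE v]
  rw [hint]
  -- basic facts about the cardinalities
  have hm1 : ∀ v ∈ Aj, 1 ≤ (S v).card := by
    intro v hv
    exact Finset.card_pos.mpr ⟨v, by simp [hS, hv]⟩
  have hmono : ∀ v ∈ Aj, ∀ w ∈ Aj, d u v < d u w → (S v).card < (S w).card := by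
    intro v hv w hw hlt
    refine Finset.card_lt_card ⟨?_, ?_⟩
    · intro x hx
      simp only [hS, Finset.mem_filter] at hx ⊢
      exact ⟨hx.1, hx.2.trans hlt.le⟩
    · intro hsub
      have hws : w ∈ S v := hsub (by simp [hS, hw])
      simp only [hS, Finset.mem_filter] at hws
      exact absurd hws.2 (not_le.mpr hlt)
  have hminj : ∀ v ∈ Aj, ∀ w ∈ Aj, (S v).card = (S w).card → v = w := by
    intro v hv w hw hcardeq
    by_contra hne
    have hd : d u v ≠ d u w := fun h => hne (hinj v hv w hw h)
    rcases hd.lt_or_gt with h | h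
    · exact absurd hcardeq (hmono v hv w hw h).ne
    · exact absurd hcardeq.symm (hmono w hw v hv h).ne
  -- bound the sum by a geometric series
  have hsum : ∑ v ∈ Aj, r ^ (S v).card
      = ∑ i ∈ Aj.image (fun v => (S v).card - 1), r ^ (i + 1) := by
    rw [Finset.sum_image]
    · refine Finset.sum_congr rfl fun v hv => ?_
      rw [Nat.sub_add_cancel (hm1 v hv)]
    · intro v hv w hw h
      refine hminj v hv w hw ?_
      have h1 := hm1 v hv
      have h2 := hm1 w hw
      beta_reduce at h
      omega
  have hgeo : ∑ i ∈ Aj.image (fun v => (S v).card - 1), r ^ (i + 1)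
      ≤ r * (1 - r)⁻¹ := by
    refine le_trans (ENNReal.sum_le_tsum _) ?_
    rw [ENNReal.tsum_geometric_add_one]
  have h1r : (1 : ℝ≥0∞) - r = q := ENNReal.sub_sub_cancel ENNReal.one_ne_top hq1
  -- arithmetic: `r * (1 - r)⁻¹ = q⁻¹ - 1 = ofReal (a⁻¹ - 1)`
  have hqinv : q⁻¹ = ENNReal.ofReal a⁻¹ := by
    rw [hq, ← ENNReal.ofReal_inv_of_pos ha]
  have hainv : a⁻¹ = (1 / δ) * (n : ℝ) ^ (lam / k) := by
    rw [ha_def, Real.rpow_neg hnR0.le, mul_inv, inv_inv, one_div]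
  have hfinal : r * (1 - r)⁻¹ = ENNReal.ofReal ((1 / δ) * (n : ℝ) ^ (lam / k) - 1) := by
    rw [h1r, hr, ENNReal.sub_mul (fun _ _ => ENNReal.inv_ne_top.mpr hq0), one_mul,
      ENNReal.mul_inv_cancel hq0 hqtop, ← hainv,
      ENNReal.ofReal_sub _ zero_le_one, ENNReal.ofReal_one, hqinv]
  calc ∑ v ∈ Aj, r ^ (S v).card
      = ∑ i ∈ Aj.image (fun v => (S v).card - 1), r ^ (i + 1) := hsum
    _ ≤ r * (1 - r)⁻¹ := hgeo
    _ = ENNReal.ofReal ((1 / δ) * (n : ℝ) ^ (lam / k) - 1) := hfinal
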